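/- arXiv:0809.2017 — 4 statements merged into one kernel-verified Lean document; each statement's English description precedes it below -/
import Mathlib

section
/- For every n ≥ 0 and every 0 ≤ k ≤ n, the subspace H_k ⊆ C({0,1}^n) is invariant under the action of the automorphism group Aut({0,1}^n) of the Hamming cube on functions, and H_k is Aut({0,1}^n)-irreducible: every Aut({0,1}^n)-invariant linear subspace of H_k equals {0} or H_k. -/
/-- The character `χ_y(x) = (-1)^{y·x}` on the Hamming cube `{0,1}^n`. -/
noncomputable def hammingCharacter (n : ℕ) (y : Fin n → ZMod 2) :
    (Fin n → ZMod 2) → ℂ :=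
  fun x => (-1 : ℂ) ^ (∑ i : Fin n, (y i).val * (x i).val)

/-- `H_k`: the span of the characters `χ_y` with Hamming weight `‖y‖ = k`. -/
noncomputable def cubeH (n k : ℕ) : Submodule ℂ ((Fin n → ZMod 2) → ℂ) :=
  Submodule.span ℂ {f | ∃ y : Fin n → ZMod 2, hammingNorm y = k ∧ f = hammingCharacter n y}

/-- The automorphism group of the Hamming cube: the group of permutations of
`{0,1}^n` generated by coordinate permutations `x ↦ x ∘ σ⁻¹` and translations
`x ↦ x + v` (addition mod 2). -/
def cubeAut (n : ℕ) : Subgroup (Equiv.Perm (Fin n → ZMod 2)) :=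
  Subgroup.closure
    ({u | ∃ σ : Equiv.Perm (Fin n), u = σ.arrowCongr (Equiv.refl (ZMod 2))} ∪
     {u | ∃ v : Fin n → ZMod 2, u = Equiv.addLeft v})

namespace CubeAux

/-- sign of an element of `ZMod 2`. -/
noncomputable def eps (t : ZMod 2) : ℂ := (-1) ^ t.val

/-- mod-2 dot product. -/
def dot {n : ℕ} (y x : Fin n → ZMod 2) : ZMod 2 := ∑ i, y i * x i

lemma zmod2_eq_one {a : ZMod 2} (h : a ≠ 0) : a = 1 := by
  revert a; decide

lemma zmod2_neg (a : ZMod 2) : -a = a := by revert a; decide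

lemma zmod2_add_self (a : ZMod 2) : a + a = 0 := by fin_cases a <;> decide

lemma pi_neg {n : ℕ} (v : Fin n → ZMod 2) : -v = v := funext fun i => zmod2_neg _

lemma pi_add_self {n : ℕ} (v : Fin n → ZMod 2) : v + v = 0 :=
  funext fun i => zmod2_add_self _

lemma neg_one_pow_mod (m : ℕ) : (-1 : ℂ) ^ m = (-1 : ℂ) ^ (m % 2) := by
  conv_lhs => rw [← Nat.div_add_mod m 2]
  rw [pow_add, pow_mul]
  norm_num

lemma eps_add (a b : ZMod 2) : eps (a + b) = eps a * eps b := by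
  unfold eps
  rw [ZMod.val_add, ← neg_one_pow_mod, pow_add]

lemma char_eq {n : ℕ} (y x : Fin n → ZMod 2) :
    hammingCharacter n y x = eps (dot y x) := by
  have h1 : ((∑ i, (y i).val * (x i).val : ℕ) : ZMod 2) = dot y x := by
    unfold dot
    push_cast [ZMod.natCast_val, ZMod.cast_id]
    rfl
  unfold hammingCharacter eps
  rw [← h1, ZMod.val_natCast, ← neg_one_pow_mod]

lemma dot_add_right {n : ℕ} (y x v : Fin n → ZMod 2) :
    dot y (x + v) = dot y x + dot y v := by
  unfold dot
  rw [← Finset.sum_add_distrib]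
  exact Finset.sum_congr rfl fun i _ => by simp [Pi.add_apply, mul_add]

lemma dot_add_left {n : ℕ} (y y' x : Fin n → ZMod 2) :
    dot (y + y') x = dot y x + dot y' x := by
  unfold dot
  rw [← Finset.sum_add_distrib]
  exact Finset.sum_congr rfl fun i _ => by simp [Pi.add_apply, add_mul]

lemma char_add_right {n : ℕ} (y x v : Fin n → ZMod 2) :
    hammingCharacter n y (x + v) = hammingCharacter n y x * hammingCharacter n y v := by
  rw [char_eq, char_eq, char_eq, dot_add_right, eps_add]

lemma char_mul {n : ℕ} (y y' x : Fin n → ZMod 2) :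
    hammingCharacter n y x * hammingCharacter n y' x = hammingCharacter n (y + y') x := by
  rw [char_eq, char_eq, char_eq, dot_add_left, eps_add]

lemma dot_symm {n : ℕ} (y x : Fin n → ZMod 2) : dot y x = dot x y := by
  unfold dot; exact Finset.sum_congr rfl fun i _ => mul_comm _ _

lemma char_symm {n : ℕ} (y x : Fin n → ZMod 2) :
    hammingCharacter n y x = hammingCharacter n x y := by
  rw [char_eq, char_eq, dot_symm]

lemma dot_comp {n : ℕ} (y x : Fin n → ZMod 2) (σ : Equiv.Perm (Fin n)) :
    dot y (x ∘ σ) = dot (y ∘ σ.symm) x := by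
  unfold dot
  rw [← Equiv.sum_comp σ (fun j => (y ∘ σ.symm) j * x j)]
  exact Finset.sum_congr rfl fun i _ => by simp

lemma perm_char {n : ℕ} (y : Fin n → ZMod 2) (σ : Equiv.Perm (Fin n)) :
    (fun x => hammingCharacter n y (x ∘ σ)) = hammingCharacter n (y ∘ σ.symm) := by
  funext x
  rw [char_eq, char_eq, dot_comp]

lemma hn_comp {n : ℕ} (y : Fin n → ZMod 2) (σ : Equiv.Perm (Fin n)) :
    hammingNorm (y ∘ σ) = hammingNorm y := by
  have h1 : hammingNorm (y ∘ σ) = Fintype.card {i // y (σ i) ≠ 0} :=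
    (Fintype.card_subtype _).symm
  have h2 : hammingNorm y = Fintype.card {j // y j ≠ 0} :=
    (Fintype.card_subtype _).symm
  rw [h1, h2]
  exact Fintype.card_congr (σ.subtypeEquiv fun a => Iff.rfl)

lemma char_zero {n : ℕ} (x : Fin n → ZMod 2) : hammingCharacter n 0 x = 1 := by
  rw [char_eq]
  have : dot (0 : Fin n → ZMod 2) x = 0 := by unfold dot; simp
  rw [this]; simp [eps, ZMod.val_zero]

/-- orthogonality: the sum of a nontrivial character over the cube vanishes. -/
lemma sum_char {n : ℕ} (z : Fin n → ZMod 2) (hz : z ≠ 0) :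
    ∑ x : Fin n → ZMod 2, hammingCharacter n z x = 0 := by
  obtain ⟨i₀, hi₀⟩ : ∃ i, z i ≠ 0 := by
    by_contra h
    push_neg at h
    exact hz (funext fun i => h i)
  set e : Fin n → ZMod 2 := fun j => if j = i₀ then 1 else 0 with he
  have hde : dot z e = z i₀ := by
    unfold dot
    rw [Finset.sum_eq_single i₀]
    · simp [he]
    · intro b _ hb; simp [he, hb]
    · simp
  have hce : hammingCharacter n z e = -1 := by
    rw [char_eq, hde, zmod2_eq_one hi₀]
    have hv : (1 : ZMod 2).val = 1 := by decide
    simp [eps, hv]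
  have key : ∑ x : Fin n → ZMod 2, hammingCharacter n z x
      = -∑ x : Fin n → ZMod 2, hammingCharacter n z x := by
    conv_lhs => rw [← Equiv.sum_comp (Equiv.addLeft e) (fun x => hammingCharacter n z x)]
    rw [← Finset.sum_neg_distrib]
    refine Finset.sum_congr rfl fun x _ => ?_
    have : (Equiv.addLeft e) x = x + e := by
      simp [Equiv.coe_addLeft, add_comm]
    rw [this, char_add_right, hce]
    ring
  have h2 : (2 : ℂ) * ∑ x : Fin n → ZMod 2, hammingCharacter n z x = 0 := by
    linear_combination key
  have h3 := mul_eq_zero.mp h2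
  simpa using h3

lemma sum_char_eq {n : ℕ} (z : Fin n → ZMod 2) :
    ∑ x : Fin n → ZMod 2, hammingCharacter n z x = if z = 0 then (2 ^ n : ℂ) else 0 := by
  by_cases h : z = 0
  · subst h
    simp only [char_zero, Finset.sum_const, if_pos rfl, nsmul_eq_mul, mul_one]
    norm_num [Finset.card_univ]
  · rw [if_neg h]; exact sum_char z h

/-- unnormalized Fourier coefficient. -/
noncomputable def four {n : ℕ} (f : (Fin n → ZMod 2) → ℂ) (y : Fin n → ZMod 2) : ℂ :=
  ∑ x, f x * hammingCharacter n y x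

lemma add_eq_zero_iff {n : ℕ} (a b : Fin n → ZMod 2) : a + b = 0 ↔ a = b := by
  constructor
  · intro h
    funext i
    have h1 := congrFun h i
    simp only [Pi.add_apply, Pi.zero_apply] at h1
    have h2 : b i = a i := by
      rw [← zero_add (b i), ← zmod2_add_self (a i), add_assoc, h1, add_zero]
    exact h2.symm
  · rintro rfl; exact pi_add_self _

lemma four_char {n : ℕ} (y' y : Fin n → ZMod 2) :
    four (hammingCharacter n y') y = if y' = y then (2 ^ n : ℂ) else 0 := by
  unfold four
  have h1 : ∀ x, hammingCharacter n y' x * hammingCharacter n y x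
      = hammingCharacter n (y' + y) x := fun x => char_mul _ _ _
  rw [Finset.sum_congr rfl fun x _ => h1 x, sum_char_eq]
  exact if_congr (add_eq_zero_iff y' y) rfl rfl

lemma four_add {n : ℕ} (f g : (Fin n → ZMod 2) → ℂ) (y : Fin n → ZMod 2) :
    four (f + g) y = four f y + four g y := by
  unfold four
  rw [← Finset.sum_add_distrib]
  exact Finset.sum_congr rfl fun x _ => by simp [add_mul]

lemma four_smul {n : ℕ} (c : ℂ) (f : (Fin n → ZMod 2) → ℂ) (y : Fin n → ZMod 2) :
    four (c • f) y = c * four f y := by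
  unfold four
  rw [Finset.mul_sum]
  exact Finset.sum_congr rfl fun x _ => by simp [mul_assoc]

lemma four_zero {n : ℕ} (y : Fin n → ZMod 2) : four (0 : (Fin n → ZMod 2) → ℂ) y = 0 := by
  unfold four; simp

/-- Fourier inversion gives nondegeneracy. -/
lemma exists_four_ne {n : ℕ} (f : (Fin n → ZMod 2) → ℂ) (hf : f ≠ 0) :
    ∃ y, four f y ≠ 0 := by
  by_contra h
  push_neg at h
  apply hf
  funext x₀
  have key : ∑ y : Fin n → ZMod 2, four f y * hammingCharacter n y x₀
      = (2 ^ n : ℂ) * f x₀ := by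
    unfold four
    have e1 : ∀ y : Fin n → ZMod 2,
        (∑ x, f x * hammingCharacter n y x) * hammingCharacter n y x₀
        = ∑ x, f x * hammingCharacter n y x * hammingCharacter n y x₀ := fun y =>
      Finset.sum_mul _ _ _
    rw [Finset.sum_congr rfl fun y _ => e1 y, Finset.sum_comm]
    have h1 : ∀ x, ∑ y : Fin n → ZMod 2, f x * hammingCharacter n y x * hammingCharacter n y x₀
        = f x * (if x + x₀ = 0 then (2 ^ n : ℂ) else 0) := by
      intro x
      rw [← sum_char_eq, Finset.mul_sum]
      refine Finset.sum_congr rfl fun y _ => ?_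
      rw [mul_assoc]
      congr 1
      rw [char_symm y x, char_symm y x₀, char_mul]
    rw [Finset.sum_congr rfl fun x _ => h1 x]
    have h2 : ∀ x : Fin n → ZMod 2, x + x₀ = 0 ↔ x = x₀ := fun x => add_eq_zero_iff x x₀
    have h3 : ∀ x : Fin n → ZMod 2,
        (f x * if x + x₀ = 0 then (2 ^ n : ℂ) else 0)
        = f x * if x = x₀ then (2 ^ n : ℂ) else 0 := fun x =>
      congrArg (f x * ·) (if_congr (h2 x) rfl rfl)
    rw [Finset.sum_congr rfl fun x _ => h3 x]
    simp only [mul_ite, mul_zero, Finset.sum_ite_eq', Finset.mem_univ, if_true]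
    ring
  rw [Finset.sum_congr rfl fun y _ => by rw [h y, zero_mul]] at key
  simp only [Finset.sum_const_zero] at key
  have h2n : (2 ^ n : ℂ) ≠ 0 := pow_ne_zero n two_ne_zero
  have h4 := (mul_eq_zero.mp key.symm).resolve_left h2n
  simpa using h4

lemma four_eq_zero_of_mem {n k : ℕ} (f : (Fin n → ZMod 2) → ℂ) (hf : f ∈ cubeH n k)
    (y : Fin n → ZMod 2) (hy : hammingNorm y ≠ k) : four f y = 0 := by
  refine Submodule.span_induction (p := fun g _ => four g y = 0) ?_ (four_zero y) ?_ ?_ hf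
  · rintro g ⟨y', hy', rfl⟩
    rw [four_char, if_neg]
    rintro rfl
    exact hy hy'
  · intro a b _ _ ha hb
    rw [four_add, ha, hb, add_zero]
  · intro c a _ ha
    rw [four_smul, ha, mul_zero]

lemma subtypeCongr_pos {α : Type*} {p q : α → Prop} [DecidablePred p] [DecidablePred q]
    (e : {x // p x} ≃ {x // q x}) (f : {x // ¬p x} ≃ {x // ¬q x}) {i : α} (h : p i) :
    q (Equiv.subtypeCongr e f i) := by
  simp [Equiv.subtypeCongr, h]
  exact (e ⟨i, h⟩).2

lemma subtypeCongr_neg {α : Type*} {p q : α → Prop} [DecidablePred p] [DecidablePred q]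
    (e : {x // p x} ≃ {x // q x}) (f : {x // ¬p x} ≃ {x // ¬q x}) {i : α} (h : ¬ p i) :
    ¬ q (Equiv.subtypeCongr e f i) := by
  simp [Equiv.subtypeCongr, h]
  exact (f ⟨i, h⟩).2

/-- permutations realize any weight-preserving rearrangement. -/
lemma exists_perm {n : ℕ} (y y' : Fin n → ZMod 2) (h : hammingNorm y = hammingNorm y') :
    ∃ σ : Equiv.Perm (Fin n), y ∘ σ = y' := by
  classical
  have hc : Fintype.card {i // y' i ≠ 0} = Fintype.card {i // y i ≠ 0} := by
    rw [Fintype.card_subtype, Fintype.card_subtype]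
    exact h.symm
  have hcc : Fintype.card {i // ¬ y' i ≠ 0} = Fintype.card {i // ¬ y i ≠ 0} := by
    rw [Fintype.card_subtype_compl (fun i => y' i ≠ 0),
      Fintype.card_subtype_compl (fun i => y i ≠ 0), hc]
  refine ⟨Equiv.subtypeCongr (Fintype.equivOfCardEq hc) (Fintype.equivOfCardEq hcc), ?_⟩
  funext i
  by_cases hi : y' i ≠ 0
  · have h1 : y (Equiv.subtypeCongr (Fintype.equivOfCardEq hc) (Fintype.equivOfCardEq hcc) i)
        ≠ 0 := subtypeCongr_pos (p := fun j => y' j ≠ 0) (q := fun j => y j ≠ 0) _ _ hi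
    simp only [Function.comp_apply]
    rw [zmod2_eq_one h1, zmod2_eq_one hi]
  · have h1 : ¬ y (Equiv.subtypeCongr (Fintype.equivOfCardEq hc) (Fintype.equivOfCardEq hcc) i)
        ≠ 0 := subtypeCongr_neg (p := fun j => y' j ≠ 0) (q := fun j => y j ≠ 0) _ _ hi
    push_neg at h1
    push_neg at hi
    simp only [Function.comp_apply]
    rw [h1, hi]

lemma char_mem {n k : ℕ} (y : Fin n → ZMod 2) (hy : hammingNorm y = k) :
    hammingCharacter n y ∈ cubeH n k :=
  Submodule.subset_span ⟨y, hy, rfl⟩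

/-- precomposition as a linear map. -/
noncomputable def preL {n : ℕ} (u : (Fin n → ZMod 2) → (Fin n → ZMod 2)) :
    ((Fin n → ZMod 2) → ℂ) →ₗ[ℂ] ((Fin n → ZMod 2) → ℂ) where
  toFun f := fun x => f (u x)
  map_add' f g := rfl
  map_smul' c f := rfl

lemma pre_mem {n k : ℕ} (u : (Fin n → ZMod 2) → (Fin n → ZMod 2))
    (hu : ∀ y : Fin n → ZMod 2, hammingNorm y = k →
      (fun x => hammingCharacter n y (u x)) ∈ cubeH n k) :
    ∀ f ∈ cubeH n k, (fun x => f (u x)) ∈ cubeH n k := by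
  intro f hf
  have : cubeH n k ≤ (cubeH n k).comap (preL u) := by
    rw [cubeH, Submodule.span_le]
    rintro g ⟨y, hy, rfl⟩
    exact hu y hy
  exact this hf

lemma gen_perm {n k : ℕ} (σ : Equiv.Perm (Fin n)) :
    ∀ f ∈ cubeH n k, (fun x => f (x ∘ σ)) ∈ cubeH n k := by
  apply pre_mem
  intro y hy
  rw [perm_char]
  exact char_mem _ (by rw [hn_comp]; exact hy)

lemma gen_add {n k : ℕ} (v : Fin n → ZMod 2) :
    ∀ f ∈ cubeH n k, (fun x => f (v + x)) ∈ cubeH n k := by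
  apply pre_mem
  intro y hy
  have : (fun x => hammingCharacter n y (v + x))
      = hammingCharacter n y v • hammingCharacter n y := by
    funext x
    simp only [Pi.smul_apply, smul_eq_mul]
    rw [add_comm, char_add_right, mul_comm]
  rw [this]
  exact Submodule.smul_mem _ _ (char_mem _ hy)

lemma arrowCongr_inv_apply {n : ℕ} (σ : Equiv.Perm (Fin n)) (x : Fin n → ZMod 2) :
    (σ.arrowCongr (Equiv.refl (ZMod 2)))⁻¹ x = x ∘ σ := by
  rw [Equiv.Perm.inv_def]
  funext i
  simp [Equiv.arrowCongr]

lemma arrowCongr_apply' {n : ℕ} (σ : Equiv.Perm (Fin n)) (x : Fin n → ZMod 2) :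
    (σ.arrowCongr (Equiv.refl (ZMod 2))) x = x ∘ σ.symm := by
  funext i
  simp [Equiv.arrowCongr]

lemma addLeft_inv_apply {n : ℕ} (v x : Fin n → ZMod 2) :
    (Equiv.addLeft v)⁻¹ x = v + x := by
  rw [Equiv.Perm.inv_def, Equiv.addLeft_symm]
  simp [pi_neg]

/-- invariance of `H_k` under the whole automorphism group. -/
lemma invariance {n k : ℕ} :
    ∀ u ∈ cubeAut n,
      (∀ f ∈ cubeH n k, (fun x => f (u x)) ∈ cubeH n k) ∧
      (∀ f ∈ cubeH n k, (fun x => f (u⁻¹ x)) ∈ cubeH n k) := by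
  intro u hu
  refine Subgroup.closure_induction
    (p := fun u _ => (∀ f ∈ cubeH n k, (fun x => f (u x)) ∈ cubeH n k) ∧
      (∀ f ∈ cubeH n k, (fun x => f (u⁻¹ x)) ∈ cubeH n k)) ?_ ?_ ?_ ?_ hu
  · rintro u (⟨σ, rfl⟩ | ⟨v, rfl⟩)
    · constructor
      · intro f hf
        have h1 : (fun x => f ((σ.arrowCongr (Equiv.refl (ZMod 2))) x))
            = fun x => f (x ∘ σ.symm) := by
          funext x; rw [arrowCongr_apply']
        rw [h1]
        exact gen_perm σ.symm f hf
      · intro f hf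
        have h1 : (fun x => f ((σ.arrowCongr (Equiv.refl (ZMod 2)))⁻¹ x))
            = fun x => f (x ∘ σ) := by
          funext x; rw [arrowCongr_inv_apply]
        rw [h1]
        exact gen_perm σ f hf
    · constructor
      · intro f hf
        have h1 : (fun x => f ((Equiv.addLeft v) x)) = fun x => f (v + x) := by
          funext x; simp
        rw [h1]
        exact gen_add v f hf
      · intro f hf
        have h1 : (fun x => f ((Equiv.addLeft v)⁻¹ x)) = fun x => f (v + x) := by
          funext x; rw [addLeft_inv_apply]
        rw [h1]
        exact gen_add v f hf
  · constructor <;> intro f hf <;> simpa using hf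
  · intro a b _ _ ha hb
    constructor
    · intro f hf
      have h1 : (fun x => f ((a * b) x)) = fun x => (fun z => f (a z)) (b x) := rfl
      rw [h1]
      exact hb.1 _ (ha.1 f hf)
    · intro f hf
      have h1 : (fun x => f ((a * b)⁻¹ x)) = fun x => (fun z => f (b⁻¹ z)) (a⁻¹ x) := by
        funext x; simp [mul_inv_rev]
    -- ((a*b)⁻¹ x) = b⁻¹ (a⁻¹ x)
      rw [h1]
      exact ha.2 _ (hb.2 f hf)
  · intro a _ ha
    exact ⟨fun f hf => by simpa using ha.2 f hf, fun f hf => by simpa using ha.1 f hf⟩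

end CubeAux

open CubeAux in
/-- each `H_k ⊆ C({0,1}^n)` is invariant under the action
`(u f)(x) = f(u⁻¹ x)` of `Aut({0,1}^n)`, and is `Aut({0,1}^n)`-irreducible. -/
theorem cubeH_invariant_and_irreducible (n k : ℕ) (hk : k ≤ n) :
    (∀ u ∈ cubeAut n, ∀ f ∈ cubeH n k,
      (fun x => f (u⁻¹ x)) ∈ cubeH n k) ∧
    (∀ W : Submodule ℂ ((Fin n → ZMod 2) → ℂ), W ≤ cubeH n k →
      (∀ u ∈ cubeAut n, ∀ f ∈ W, (fun x => f (u⁻¹ x)) ∈ W) →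
      W = ⊥ ∨ W = cubeH n k) := by
  constructor
  · intro u hu
    exact (invariance u hu).2
  · intro W hWle hWinv
    by_cases hW : W = ⊥
    · exact Or.inl hW
    right
    -- pick a nonzero element of W
    obtain ⟨f, hfW, hf0⟩ := Submodule.exists_mem_ne_zero_of_ne_bot hW
    obtain ⟨y, hy4⟩ := exists_four_ne f hf0
    have hyk : hammingNorm y = k := by
      by_contra h
      exact hy4 (four_eq_zero_of_mem f (hWle hfW) y h)
    -- the projection of f onto χ_y lies in W
    have htrans : ∀ v : Fin n → ZMod 2, (fun x => f (v + x)) ∈ W := by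
      intro v
      have hmem : Equiv.addLeft v ∈ cubeAut n :=
        Subgroup.subset_closure (Or.inr ⟨v, rfl⟩)
      have := hWinv _ hmem f hfW
      have h1 : (fun x => f ((Equiv.addLeft v)⁻¹ x)) = fun x => f (v + x) := by
        funext x; rw [addLeft_inv_apply]
      rwa [h1] at this
    have hgW : (∑ v : Fin n → ZMod 2,
        hammingCharacter n y v • (fun x => f (v + x))) ∈ W :=
      Submodule.sum_mem _ fun v _ => Submodule.smul_mem _ _ (htrans v)
    have hgeq : (∑ v : Fin n → ZMod 2,
        hammingCharacter n y v • (fun x => f (v + x)))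
        = four f y • hammingCharacter n y := by
      funext x
      rw [Finset.sum_apply]
      simp only [Pi.smul_apply, smul_eq_mul]
      have h1 : ∑ v : Fin n → ZMod 2, hammingCharacter n y v * f (v + x)
          = ∑ w : Fin n → ZMod 2, hammingCharacter n y (w + x) * f w := by
        rw [← Equiv.sum_comp (Equiv.addRight x)
          (fun w => hammingCharacter n y (w + x) * f w)]
        refine Finset.sum_congr rfl fun v _ => ?_
        have he : (Equiv.addRight x) v = v + x := rfl
        rw [he]
        have hvv : v + x + x = v := by rw [add_assoc, pi_add_self, add_zero]
        rw [hvv]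
      rw [h1]
      unfold four
      rw [Finset.sum_mul]
      refine Finset.sum_congr rfl fun w _ => ?_
      rw [char_add_right]
      ring
    have hχW : hammingCharacter n y ∈ W := by
      have h2 : four f y • hammingCharacter n y ∈ W := hgeq ▸ hgW
      have h3 := Submodule.smul_mem W (four f y)⁻¹ h2
      rwa [smul_smul, inv_mul_cancel₀ hy4, one_smul] at h3
    -- use transitivity of the permutation action on weight-k vectors
    refine le_antisymm hWle ?_
    rw [cubeH, Submodule.span_le]
    rintro g ⟨y', hy', rfl⟩
    obtain ⟨σ, hσ⟩ := exists_perm y y' (by rw [hyk, hy'])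
    have hmem : σ.symm.arrowCongr (Equiv.refl (ZMod 2)) ∈ cubeAut n :=
      Subgroup.subset_closure (Or.inl ⟨σ.symm, rfl⟩)
    have hin := hWinv _ hmem _ hχW
    have h1 : (fun x => hammingCharacter n y ((σ.symm.arrowCongr (Equiv.refl (ZMod 2)))⁻¹ x))
        = hammingCharacter n y' := by
      have h2 : (fun x => hammingCharacter n y ((σ.symm.arrowCongr (Equiv.refl (ZMod 2)))⁻¹ x))
          = fun x => hammingCharacter n y (x ∘ σ.symm) := by
        funext x; rw [arrowCongr_inv_apply]
      rw [h2, perm_char]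
      rw [Equiv.symm_symm, hσ]
    rwa [h1] at hin
end

section
/- Let n ≥ 0 and 0 ≤ k ≤ n. If f ∈ H_k is invariant under all coordinate permutations, i.e. f(x ∘ σ) = f(x) for every permutation σ of the n coordinates and every x ∈ {0,1}^n, then f is a scalar multiple of the function x ↦ Σ_{y : ‖y‖ = k} χ_y(x). In other words, the space of zonal spherical functions with pole 0 inside H_k is one-dimensional. -/
open Finset

lemma zmod2_cases (a : ZMod 2) : a = 0 ∨ a = 1 := by revert a; decide

lemma char_prod (n : ℕ) (y x : Fin n → ZMod 2) :
    hammingCharacter n y x = ∏ i : Fin n, (-1 : ℂ) ^ ((y i).val * (x i).val) := by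
  rw [hammingCharacter, Finset.prod_pow_eq_pow_sum]

lemma char_mul (n : ℕ) (y z x : Fin n → ZMod 2) :
    hammingCharacter n y x * hammingCharacter n z x = hammingCharacter n (y + z) x := by
  simp only [char_prod, ← Finset.prod_mul_distrib]
  refine Finset.prod_congr rfl fun i _ => ?_
  rcases zmod2_cases (y i) with h1 | h1 <;> rcases zmod2_cases (z i) with h2 | h2 <;>
    rcases zmod2_cases (x i) with h3 | h3 <;>
    simp [h1, h2, h3, Pi.add_apply, show ZMod.val ((1:ZMod 2)+1) = 0 from rfl, show ZMod.val (1:ZMod 2) = 1 from rfl]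

lemma sum_char (n : ℕ) (w : Fin n → ZMod 2) :
    ∑ x : Fin n → ZMod 2, hammingCharacter n w x
      = if w = 0 then ((2 : ℂ) ^ n) else 0 := by
  simp only [char_prod]
  rw [← Fintype.prod_sum (fun i (b : ZMod 2) => (-1 : ℂ) ^ ((w i).val * b.val))]
  have hfac : ∀ i, (∑ b : ZMod 2, (-1 : ℂ) ^ ((w i).val * b.val))
      = if w i = 0 then 2 else 0 := by
    intro i
    rcases zmod2_cases (w i) with h | h <;>
      simp [h, Fin.sum_univ_two, show ((0:ZMod 2)).val = 0 from rfl,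
        show ZMod.val (1:ZMod 2) = 1 from rfl,
        show (Finset.univ : Finset (ZMod 2)) = {0, 1} by decide,
        show ZMod.val ((0:ZMod 2)) = 0 from rfl]
  rw [Finset.prod_congr rfl fun i _ => hfac i]
  by_cases hw : w = 0
  · simp [hw]
  · obtain ⟨i, hi⟩ := Function.ne_iff.mp hw
    rw [if_neg hw]
    exact Finset.prod_eq_zero (Finset.mem_univ i) (by simpa using hi)

lemma char_orth (n : ℕ) (y z : Fin n → ZMod 2) :
    ∑ x : Fin n → ZMod 2, hammingCharacter n y x * hammingCharacter n z x
      = if y = z then ((2 : ℂ) ^ n) else 0 := by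
  simp only [char_mul, sum_char]
  congr 1
  simp only [eq_iff_iff]
  constructor
  · intro h; funext i
    have := congrFun h i
    rcases zmod2_cases (y i) with h1 | h1 <;> rcases zmod2_cases (z i) with h2 | h2 <;>
      simp_all [Pi.add_apply]
  · rintro rfl; funext i
    rcases zmod2_cases (y i) with h1 | h1 <;> simp [h1] <;> decide

lemma recon (n k : ℕ) (f : (Fin n → ZMod 2) → ℂ) (hf : f ∈ cubeH n k) :
    f = ∑ z ∈ Finset.univ.filter (fun z : Fin n → ZMod 2 => hammingNorm z = k),
        ((∑ x : Fin n → ZMod 2, f x * hammingCharacter n z x) / 2 ^ n) •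
          hammingCharacter n z := by
  induction hf using Submodule.span_induction with
  | mem g hg =>
    obtain ⟨w, hw, rfl⟩ := hg
    have key : ∀ z : Fin n → ZMod 2,
        ((∑ x : Fin n → ZMod 2, hammingCharacter n w x * hammingCharacter n z x) / 2 ^ n) •
          hammingCharacter n z
        = if z = w then hammingCharacter n w else 0 := by
      intro z
      rw [char_orth]
      by_cases h : w = z
      · subst h; simp [if_pos rfl, div_self (pow_ne_zero n (two_ne_zero' ℂ))]
      · rw [if_neg h, if_neg (fun hzw => h hzw.symm)]; simp
    rw [Finset.sum_congr rfl fun z _ => key z, Finset.sum_ite_eq' _ w]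
    simp [hw]
  | zero => simp
  | add g h hg hh ihg ihh =>
    conv_lhs => rw [ihg, ihh]
    rw [← Finset.sum_add_distrib]
    refine Finset.sum_congr rfl fun z _ => ?_
    rw [← add_smul]
    congr 1
    rw [← add_div, ← Finset.sum_add_distrib]
    congr 1
    exact Finset.sum_congr rfl fun x _ => by simp [add_mul]
  | smul a g hg ihg =>
    conv_lhs => rw [ihg]
    rw [Finset.smul_sum]
    refine Finset.sum_congr rfl fun z _ => ?_
    rw [smul_smul]
    congr 1
    rw [mul_div_assoc']
    congr 1
    rw [Finset.mul_sum]
    exact Finset.sum_congr rfl fun x _ => by simp [mul_assoc]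

lemma zmod2_ne_zero {a : ZMod 2} (h : a ≠ 0) : a = 1 := by
  rcases zmod2_cases a with h1 | h1 <;> simp_all

lemma exists_perm_of_norm_eq (n : ℕ) (y z : Fin n → ZMod 2)
    (h : hammingNorm y = hammingNorm z) :
    ∃ σ : Equiv.Perm (Fin n), y ∘ σ = z := by
  classical
  have hc : Fintype.card {i // z i ≠ 0} = Fintype.card {i // y i ≠ 0} := by
    rw [Fintype.card_subtype, Fintype.card_subtype]
    exact h.symm
  have hc' : Fintype.card {i // ¬ z i ≠ 0} = Fintype.card {i // ¬ y i ≠ 0} := by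
    have h1 := Fintype.card_subtype_compl (fun i => z i ≠ 0)
    have h2 := Fintype.card_subtype_compl (fun i => y i ≠ 0)
    rw [h1, h2, hc]
  let e : {i // z i ≠ 0} ≃ {i // y i ≠ 0} := Fintype.equivOfCardEq hc
  let e' : {i // ¬ z i ≠ 0} ≃ {i // ¬ y i ≠ 0} := Fintype.equivOfCardEq hc'
  refine ⟨Equiv.subtypeCongr e e', funext fun i => ?_⟩
  by_cases hi : z i ≠ 0
  · have h1 : Equiv.subtypeCongr e e' i = (e ⟨i, hi⟩ : Fin n) := by
      simp [Equiv.subtypeCongr, hi]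
    simp only [Function.comp_apply, h1]
    rw [zmod2_ne_zero (e ⟨i, hi⟩).2, zmod2_ne_zero hi]
  · have h1 : Equiv.subtypeCongr e e' i = (e' ⟨i, hi⟩ : Fin n) := by
      simp [Equiv.subtypeCongr, hi]
    simp only [Function.comp_apply, h1]
    rw [not_not.mp (e' ⟨i, hi⟩).2, not_not.mp hi]

lemma char_comp (n : ℕ) (y : Fin n → ZMod 2) (σ : Equiv.Perm (Fin n))
    (x : Fin n → ZMod 2) :
    hammingCharacter n (y ∘ σ) x = hammingCharacter n y (x ∘ σ.symm) := by
  unfold hammingCharacter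
  congr 1
  calc ∑ i : Fin n, ((y ∘ σ) i).val * (x i).val
      = ∑ i : Fin n, (fun j => (y j).val * ((x ∘ σ.symm) j).val) (σ i) := by
        refine Finset.sum_congr rfl fun i _ => by simp
    _ = ∑ j : Fin n, (y j).val * ((x ∘ σ.symm) j).val :=
        Equiv.sum_comp σ (fun j => (y j).val * ((x ∘ σ.symm) j).val)


theorem cube_zonal_one_dimensional (n k : ℕ) (hk : k ≤ n)
    (f : (Fin n → ZMod 2) → ℂ) (hf : f ∈ cubeH n k)
    (hzonal : ∀ (σ : Equiv.Perm (Fin n)) (x : Fin n → ZMod 2), f (x ∘ σ) = f x) :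
    ∃ c : ℂ, f = c • fun x =>
      ∑ y ∈ Finset.univ.filter (fun y : Fin n → ZMod 2 => hammingNorm y = k),
        hammingCharacter n y x := by
  classical
  set c : (Fin n → ZMod 2) → ℂ :=
    fun z => (∑ x : Fin n → ZMod 2, f x * hammingCharacter n z x) / 2 ^ n with hc
  -- the coefficient map is permutation-invariant
  have hinv : ∀ (y : Fin n → ZMod 2) (σ : Equiv.Perm (Fin n)), c (y ∘ σ) = c y := by
    intro y σ
    simp only [hc]
    congr 1
    calc ∑ x : Fin n → ZMod 2, f x * hammingCharacter n (y ∘ σ) x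
        = ∑ x : Fin n → ZMod 2, f x * hammingCharacter n y (x ∘ σ.symm) := by
          exact Finset.sum_congr rfl fun x _ => by rw [char_comp]
      _ = ∑ x : Fin n → ZMod 2, f (x ∘ σ) * hammingCharacter n y ((x ∘ σ) ∘ σ.symm) := by
          refine (Fintype.sum_bijective (fun u : Fin n → ZMod 2 => u ∘ σ)
            ((Equiv.arrowCongr σ.symm (Equiv.refl (ZMod 2))).bijective) _ _
            fun u => ?_).symm
          rfl
      _ = ∑ x : Fin n → ZMod 2, f x * hammingCharacter n y x := by
          refine Finset.sum_congr rfl fun x _ => ?_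
          rw [hzonal σ x, show (x ∘ ⇑σ) ∘ ⇑σ.symm = x from funext fun j => by simp]
  -- a reference weight-k vector
  obtain ⟨s, -, hs⟩ := Finset.exists_subset_card_eq
    (show k ≤ (Finset.univ : Finset (Fin n)).card by simpa using hk)
  set w : Fin n → ZMod 2 := fun i => if i ∈ s then 1 else 0 with hwdef
  have hw : hammingNorm w = k := by
    rw [hammingNorm, ← hs]
    congr 1
    ext i
    by_cases h : i ∈ s <;> simp [hwdef, h]
  refine ⟨c w, ?_⟩
  have := recon n k f hf
  rw [this]
  funext x
  simp only [Finset.sum_apply, Pi.smul_apply, smul_eq_mul, Finset.mul_sum]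
  refine Finset.sum_congr rfl fun z hz => ?_
  have hz' : hammingNorm z = k := (Finset.mem_filter.mp hz).2
  obtain ⟨σ, hσ⟩ := exists_perm_of_norm_eq n w z (hw.trans hz'.symm)
  rw [← hσ]
  exact congrArg (fun a => a * hammingCharacter n (w ∘ ⇑σ) x) (hinv w σ)
end

section
/- Let n ≥ 0 and let K : {0,1}^n × {0,1}^n → ℂ be a Hermitian positive kernel (every finite matrix extracted from K is positive semidefinite) that is Aut({0,1}^n)-invariant, i.e. K(ux, uy) = K(x,y) for all u ∈ Aut({0,1}^n) and x, y ∈ {0,1}^n. Then there exist nonnegative real numbers f_0, …, f_n such that K(x,y) = Σ_{k=0}^{n} f_k K^n_k(δ(x,y)) for all x, y ∈ {0,1}^n. -/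
open scoped ComplexConjugate ComplexOrder

/-- The Krawtchouk polynomial `K^n_k(t) = ∑_{i=0}^k (-1)^i binom(t,i) binom(n-t,k-i)`
evaluated at the integer `t`. -/
def krawtchouk (n k t : ℕ) : ℤ :=
  ∑ i ∈ Finset.range (k + 1), (-1 : ℤ) ^ i * (t.choose i) * ((n - t).choose (k - i))

namespace CubeBochner

open Finset

lemma zmod2_cases : ∀ a : ZMod 2, a = 0 ∨ a = 1 := by decide

lemma zmod2_add_eq_zero : ∀ a b : ZMod 2, a + b = 0 ↔ a = b := by decide

def eps (a : ZMod 2) : ℂ := (-1) ^ a.val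

lemma eps_zero : eps 0 = 1 := by simp [eps]

lemma eps_one : eps 1 = -1 := by
  have h : (1 : ZMod 2).val = 1 := rfl
  simp [eps, h]

lemma eps_add (a b : ZMod 2) : eps (a + b) = eps a * eps b := by
  rcases zmod2_cases a with h | h <;> rcases zmod2_cases b with h' | h' <;>
    subst h <;> subst h' <;>
    simp [eps_zero, eps_one, show ((1 : ZMod 2) + 1) = 0 from by decide]

lemma conj_eps (a : ZMod 2) : conj (eps a) = eps a := by
  simp [eps]

variable {n : ℕ}

def chi (S z : Fin n → ZMod 2) : ℂ := ∏ i, eps (S i * z i)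

lemma chi_comm (S z : Fin n → ZMod 2) : chi S z = chi z S := by
  unfold chi; exact Finset.prod_congr rfl fun i _ => by rw [mul_comm]

lemma chi_add_right (S z w : Fin n → ZMod 2) :
    chi S (z + w) = chi S z * chi S w := by
  unfold chi
  rw [← Finset.prod_mul_distrib]
  exact Finset.prod_congr rfl fun i _ => by
    rw [Pi.add_apply, mul_add, eps_add]

lemma conj_chi (S z : Fin n → ZMod 2) : conj (chi S z) = chi S z := by
  unfold chi
  rw [map_prod]
  exact Finset.prod_congr rfl fun i _ => conj_eps _

lemma chi_zero_left (z : Fin n → ZMod 2) : chi (0 : Fin n → ZMod 2) z = 1 := by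
  unfold chi
  simp [eps_zero]

lemma sum_chi (S : Fin n → ZMod 2) :
    ∑ z : Fin n → ZMod 2, chi S z = if S = 0 then (2 ^ n : ℂ) else 0 := by
  split_ifs with h
  · subst h
    simp [chi_zero_left, Finset.card_univ]
  · obtain ⟨i0, hi0⟩ : ∃ i, S i ≠ 0 := by
      by_contra hc
      push_neg at hc
      exact h (funext hc)
    have hS1 : S i0 = 1 := (zmod2_cases (S i0)).resolve_left hi0
    set e : Fin n → ZMod 2 := Pi.single i0 1 with he_def
    have he : chi S e = -1 := by
      unfold chi
      rw [Finset.prod_eq_single i0]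
      · simp [he_def, hS1, eps_one]
      · intro i _ hne
        simp [he_def, Pi.single_eq_of_ne hne, eps_zero]
      · simp
    have h2 : ∑ z : Fin n → ZMod 2, chi S z
        = ∑ z : Fin n → ZMod 2, chi S (e + z) :=
      (Equiv.sum_comp (Equiv.addLeft e) (fun z => chi S z)).symm
    have h3 : ∑ z : Fin n → ZMod 2, chi S (e + z)
        = -∑ z : Fin n → ZMod 2, chi S z := by
      rw [← Finset.sum_neg_distrib]
      exact Finset.sum_congr rfl fun z _ => by
        rw [chi_add_right, he, neg_one_mul]
    have h4 := h2.trans h3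
    have : (2 : ℂ) * ∑ z : Fin n → ZMod 2, chi S z = 0 := by
      linear_combination h4
    have h2ne : (2 : ℂ) ≠ 0 := two_ne_zero
    exact (mul_eq_zero.mp this).resolve_left h2ne

lemma sum_chi_mul (w z : Fin n → ZMod 2) :
    ∑ S : Fin n → ZMod 2, chi S w * chi S z
      = if w = z then (2 ^ n : ℂ) else 0 := by
  have : ∀ S : Fin n → ZMod 2, chi S w * chi S z = chi (w + z) S := by
    intro S
    rw [← chi_add_right, chi_comm]
  simp_rw [this]
  rw [sum_chi]
  congr 1
  simp only [eq_iff_iff]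
  constructor
  · intro h
    funext i
    exact (zmod2_add_eq_zero (w i) (z i)).mp (congrFun h i)
  · intro h
    funext i
    exact (zmod2_add_eq_zero (w i) (z i)).mpr (congrFun h i)

end CubeBochner

namespace CubeBochner
open Finset
variable {n : ℕ}

lemma zmod2_eq_one_iff_ne_zero : ∀ a : ZMod 2, a = 1 ↔ a ≠ 0 := by decide

lemma zmod2_mul_eq_zero : ∀ a b : ZMod 2, ¬(a = 1 ∧ b = 1) → a * b = 0 := by decide

def supp (z : Fin n → ZMod 2) : Finset (Fin n) := {i | z i = 1}

lemma card_supp (z : Fin n → ZMod 2) : (supp z).card = hammingNorm z := by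
  unfold supp hammingNorm
  congr 1
  ext i
  simp [zmod2_eq_one_iff_ne_zero]

lemma chi_eq_pow (S z : Fin n → ZMod 2) :
    chi S z = (-1 : ℂ) ^ ((supp S ∩ supp z).card) := by
  unfold chi
  rw [← Finset.prod_sdiff (Finset.subset_univ (supp S ∩ supp z))]
  have h1 : ∀ i ∈ Finset.univ \ (supp S ∩ supp z), eps (S i * z i) = 1 := by
    intro i hi
    rw [Finset.mem_sdiff, Finset.mem_inter] at hi
    have : ¬(S i = 1 ∧ z i = 1) := by
      intro ⟨hs, hz⟩
      exact hi.2 ⟨by simpa [supp] using hs, by simpa [supp] using hz⟩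
    rw [zmod2_mul_eq_zero _ _ this, eps_zero]
  have h2 : ∀ i ∈ supp S ∩ supp z, eps (S i * z i) = -1 := by
    intro i hi
    rw [Finset.mem_inter] at hi
    have hs : S i = 1 := by simpa [supp] using hi.1
    have hz : z i = 1 := by simpa [supp] using hi.2
    rw [hs, hz, one_mul, eps_one]
  rw [Finset.prod_congr rfl h1, Finset.prod_congr rfl h2]
  simp

lemma fiber_card (k i : ℕ) (hik : i ≤ k) (T : Finset (Fin n)) :
    ((Finset.powersetCard k (Finset.univ : Finset (Fin n))).filter
        (fun A => (A ∩ T).card = i)).card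
      = T.card.choose i * ((Finset.univ \ T).card.choose (k - i)) := by
  rw [← Finset.card_powersetCard, ← Finset.card_powersetCard, ← Finset.card_product]
  apply Finset.card_nbij' (fun A => (A ∩ T, A \ T)) (fun p => p.1 ∪ p.2)
  · intro A hA
    rw [Finset.mem_coe, Finset.mem_filter, Finset.mem_powersetCard] at hA
    obtain ⟨⟨hsub, hcard⟩, hcap⟩ := hA
    rw [Finset.mem_coe, Finset.mem_product, Finset.mem_powersetCard, Finset.mem_powersetCard]
    refine ⟨⟨Finset.inter_subset_right, hcap⟩, ?_, ?_⟩
    · intro x hx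
      rw [Finset.mem_sdiff] at hx
      exact Finset.mem_sdiff.mpr ⟨Finset.mem_univ x, hx.2⟩
    · have h5 := Finset.card_inter_add_card_sdiff A T
      simp only
      omega
  · intro p hp
    rw [Finset.mem_coe, Finset.mem_product, Finset.mem_powersetCard, Finset.mem_powersetCard] at hp
    obtain ⟨⟨h1sub, h1card⟩, h2sub, h2card⟩ := hp
    have hdisj : Disjoint p.1 p.2 := by
      refine Finset.disjoint_left.mpr fun x hx1 hx2 => ?_
      have := h2sub hx2
      rw [Finset.mem_sdiff] at this
      exact this.2 (h1sub hx1)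
    have hint : (p.1 ∪ p.2) ∩ T = p.1 := by
      rw [Finset.union_inter_distrib_right]
      have e1 : p.1 ∩ T = p.1 := Finset.inter_eq_left.mpr h1sub
      have e2 : p.2 ∩ T = ∅ := by
        refine Finset.eq_empty_of_forall_notMem fun x hx => ?_
        rw [Finset.mem_inter] at hx
        have := h2sub hx.1
        rw [Finset.mem_sdiff] at this
        exact this.2 hx.2
      rw [e1, e2, Finset.union_empty]
    rw [Finset.mem_coe, Finset.mem_filter, Finset.mem_powersetCard]
    refine ⟨⟨Finset.subset_univ _, ?_⟩, by rw [hint, h1card]⟩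
    rw [Finset.card_union_of_disjoint hdisj, h1card, h2card]
    omega
  · intro A hA
    rw [Finset.mem_coe, Finset.mem_filter, Finset.mem_powersetCard] at hA
    exact sup_inf_sdiff A T
  · intro p hp
    rw [Finset.mem_coe, Finset.mem_product, Finset.mem_powersetCard, Finset.mem_powersetCard] at hp
    obtain ⟨⟨h1sub, h1card⟩, h2sub, h2card⟩ := hp
    have hint : (p.1 ∪ p.2) ∩ T = p.1 := by
      rw [Finset.union_inter_distrib_right]
      have e1 : p.1 ∩ T = p.1 := Finset.inter_eq_left.mpr h1sub
      have e2 : p.2 ∩ T = ∅ := by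
        refine Finset.eq_empty_of_forall_notMem fun x hx => ?_
        rw [Finset.mem_inter] at hx
        have := h2sub hx.1
        rw [Finset.mem_sdiff] at this
        exact this.2 hx.2
      rw [e1, e2, Finset.union_empty]
    have hdiff : (p.1 ∪ p.2) \ T = p.2 := by
      rw [Finset.union_sdiff_distrib]
      have e1 : p.1 \ T = ∅ := Finset.sdiff_eq_empty_iff_subset.mpr h1sub
      have e2 : p.2 \ T = p.2 := by
        refine Finset.sdiff_eq_self_of_disjoint ?_
        refine Finset.disjoint_left.mpr fun x hx2 hxT => ?_
        have := h2sub hx2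
        rw [Finset.mem_sdiff] at this
        exact this.2 hxT
      rw [e1, e2, Finset.empty_union]
    exact Prod.ext hint hdiff

end CubeBochner

namespace CubeBochner
open Finset
variable {n : ℕ}

lemma key_sum (k : ℕ) (T : Finset (Fin n)) :
    ∑ A ∈ Finset.powersetCard k (Finset.univ : Finset (Fin n)),
        (-1 : ℂ) ^ ((A ∩ T).card)
      = (krawtchouk n k T.card : ℂ) := by
  have hmaps : ∀ A ∈ Finset.powersetCard k (Finset.univ : Finset (Fin n)),
      (A ∩ T).card ∈ Finset.range (k + 1) := by
    intro A hA
    rw [Finset.mem_powersetCard] at hA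
    rw [Finset.mem_range]
    have := Finset.card_le_card (Finset.inter_subset_left (s₂ := T) (s₁ := A))
    omega
  rw [← Finset.sum_fiberwise_of_maps_to hmaps]
  unfold krawtchouk
  push_cast
  refine Finset.sum_congr rfl fun i hi => ?_
  rw [Finset.mem_range] at hi
  have hik : i ≤ k := by omega
  have : ∀ A ∈ (Finset.powersetCard k (Finset.univ : Finset (Fin n))).filter
      (fun A => (A ∩ T).card = i), (-1 : ℂ) ^ ((A ∩ T).card) = (-1) ^ i := by
    intro A hA
    rw [Finset.mem_filter] at hA
    rw [hA.2]
  rw [Finset.sum_congr rfl this, Finset.sum_const, fiber_card k i hik T]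
  have hcompl : (Finset.univ \ T).card = n - T.card := by
    rw [Finset.card_sdiff_of_subset (Finset.subset_univ T), Finset.card_univ, Fintype.card_fin]
  rw [hcompl]
  push_cast
  ring

lemma sum_chi_weight (k : ℕ) (z : Fin n → ZMod 2) :
    ∑ S ∈ (Finset.univ : Finset (Fin n → ZMod 2)).filter (fun S => hammingNorm S = k),
        chi S z
      = (krawtchouk n k (hammingNorm z) : ℂ) := by
  rw [← card_supp z, ← key_sum k (supp z)]
  apply Finset.sum_nbij' (i := fun S => supp S)
    (j := fun A => (fun x => if x ∈ A then (1 : ZMod 2) else 0))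
  · intro S hS
    rw [Finset.mem_filter] at hS
    rw [Finset.mem_powersetCard]
    exact ⟨Finset.subset_univ _, by rw [card_supp]; exact hS.2⟩
  · intro A hA
    rw [Finset.mem_powersetCard] at hA
    rw [Finset.mem_filter]
    refine ⟨Finset.mem_univ _, ?_⟩
    rw [← card_supp]
    have : supp (fun x => if x ∈ A then (1 : ZMod 2) else 0) = A := by
      ext x
      simp only [supp, Finset.mem_filter, Finset.mem_univ, true_and]
      split_ifs with h
      · simpa using h
      · simp [h]
    rw [this, hA.2]
  · intro S hS
    funext x
    simp only [supp, Finset.mem_filter, Finset.mem_univ, true_and]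
    split_ifs with h
    · exact h.symm
    · exact ((zmod2_cases (S x)).resolve_right h).symm
  · intro A hA
    ext x
    simp only [supp, Finset.mem_filter, Finset.mem_univ, true_and]
    split_ifs with h
    · simpa using h
    · simp [h]
  · intro S hS
    exact chi_eq_pow S z

end CubeBochner

namespace CubeBochner
open Finset
variable {n : ℕ}

lemma card_subtype_eq_norm (S : Fin n → ZMod 2) :
    Fintype.card {i // S i = 1} = hammingNorm S := by
  rw [Fintype.card_subtype]
  rw [← card_supp]
  congr 1

lemma exists_perm_of_norm_eq {S T : Fin n → ZMod 2}
    (h : hammingNorm S = hammingNorm T) :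
    ∃ σ : Equiv.Perm (Fin n), S ∘ σ = T := by
  have hc1 : Fintype.card {i // T i = 1} = Fintype.card {i // S i = 1} := by
    rw [card_subtype_eq_norm, card_subtype_eq_norm, h]
  have hc2 : Fintype.card {i // ¬ T i = 1} = Fintype.card {i // ¬ S i = 1} := by
    rw [Fintype.card_subtype_compl, Fintype.card_subtype_compl, card_subtype_eq_norm,
      card_subtype_eq_norm, h]
  let e1 : {i // T i = 1} ≃ {i // S i = 1} := Fintype.equivOfCardEq hc1
  let e2 : {i // ¬ T i = 1} ≃ {i // ¬ S i = 1} := Fintype.equivOfCardEq hc2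
  let σ : Equiv.Perm (Fin n) :=
    ((Equiv.sumCompl (fun i => T i = 1)).symm.trans
      ((Equiv.sumCongr e1 e2).trans (Equiv.sumCompl (fun i => S i = 1))))
  refine ⟨σ, funext fun i => ?_⟩
  by_cases hT : T i = 1
  · have : σ i = (e1 ⟨i, hT⟩ : Fin n) := by
      show (Equiv.sumCompl fun i => S i = 1)
        (Sum.map (⇑e1) (⇑e2) ((Equiv.sumCompl fun i => T i = 1).symm i)) = _
      rw [Equiv.sumCompl_symm_apply_of_pos (p := fun j => T j = 1) hT]
      rfl
    rw [Function.comp_apply, this, hT]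
    exact (e1 ⟨i, hT⟩).2
  · have : σ i = (e2 ⟨i, hT⟩ : Fin n) := by
      show (Equiv.sumCompl fun i => S i = 1)
        (Sum.map (⇑e1) (⇑e2) ((Equiv.sumCompl fun i => T i = 1).symm i)) = _
      rw [Equiv.sumCompl_symm_apply_of_neg (p := fun j => T j = 1) hT]
      rfl
    rw [Function.comp_apply, this]
    have h1 : S ((e2 ⟨i, hT⟩ : Fin n)) = 0 :=
      (zmod2_cases _).resolve_right (e2 ⟨i, hT⟩).2
    have h2 : T i = 0 := (zmod2_cases _).resolve_right hT
    rw [h1, h2]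

end CubeBochner

namespace CubeBochner
open Finset
variable {n : ℕ}

lemma chi_comp (σ : Equiv.Perm (Fin n)) (S z : Fin n → ZMod 2) :
    chi (S ∘ σ) (z ∘ σ) = chi S z := by
  unfold chi
  exact Equiv.prod_comp σ (fun i => eps (S i * z i))

def base (n k : ℕ) : Fin n → ZMod 2 := fun i => if (i : ℕ) < k then 1 else 0

lemma norm_base {k : ℕ} (hk : k ≤ n) : hammingNorm (base n k) = k := by
  unfold hammingNorm base
  have h1 : Finset.filter (fun i : Fin n => (if (i : ℕ) < k then (1 : ZMod 2) else 0) ≠ 0)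
        Finset.univ
      = Finset.filter (fun i : Fin n => (i : ℕ) < k) Finset.univ := by
    apply Finset.filter_congr
    intro i _
    split_ifs with h
    · simpa using h
    · simpa using h
  rw [show ({i | (if (i : ℕ) < k then (1 : ZMod 2) else 0) ≠ 0} : Finset (Fin n))
      = Finset.filter (fun i : Fin n => (i : ℕ) < k) Finset.univ from h1]
  have h2 : Finset.filter (fun i : Fin n => (i : ℕ) < k) Finset.univ
      = (Finset.univ : Finset (Fin k)).map (Fin.castLEEmb hk) := by
    ext i
    simp only [Finset.mem_filter, Finset.mem_univ, true_and, Finset.mem_map]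
    constructor
    · intro h
      refine ⟨⟨(i : ℕ), h⟩, ?_⟩
      ext
      simp [Fin.castLEEmb]
    · rintro ⟨j, rfl⟩
      simpa [Fin.castLEEmb] using j.2
  rw [h2, Finset.card_map, Finset.card_univ, Fintype.card_fin]

lemma hammingNorm_le (z : Fin n → ZMod 2) : hammingNorm z ≤ n := by
  unfold hammingNorm
  calc ({i | z i ≠ 0} : Finset (Fin n)).card ≤ (Finset.univ : Finset (Fin n)).card :=
        Finset.card_le_card (Finset.filter_subset _ _)
    _ = n := by rw [Finset.card_univ, Fintype.card_fin]

lemma hammingDist_eq (x y : Fin n → ZMod 2) :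
    hammingDist x y = hammingNorm (x + y) := by
  rw [hammingDist_eq_hammingNorm]
  congr 1
  funext i
  simp only [Pi.sub_apply, Pi.add_apply]
  have : ∀ a b : ZMod 2, -a + b = a + b := by decide
  exact this (x i) (y i)

end CubeBochner


open CubeBochner

/-- Bochner characterization on the Hamming cube: every Hermitian,
positive, `Aut({0,1}^n)`-invariant kernel `K` on the Hamming cube is of the form
`K(x,y) = ∑_{k=0}^n f_k K^n_k(δ(x,y))` with nonnegative reals `f_0, …, f_n`. -/
theorem cube_bochner (n : ℕ)
    (K : (Fin n → ZMod 2) × (Fin n → ZMod 2) → ℂ)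
    (hherm : ∀ x y, K (x, y) = conj (K (y, x)))
    (hpos : ∀ (m : ℕ) (x : Fin m → Fin n → ZMod 2) (u : Fin m → ℂ),
      0 ≤ ∑ i : Fin m, ∑ j : Fin m, K (x i, x j) * u i * conj (u j))
    (hinv : ∀ u ∈ cubeAut n, ∀ x y, K (u x, u y) = K (x, y)) :
    ∃ f : Fin (n + 1) → ℝ, (∀ k, 0 ≤ f k) ∧
      ∀ x y, K (x, y) =
        ∑ k : Fin (n + 1), (f k : ℂ) * (krawtchouk n k (hammingDist x y) : ℂ) := by
  classical
  have h2n : ((2 : ℂ) ^ n) ≠ 0 := by positivity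
  -- translation invariance
  have htrans : ∀ v x y : Fin n → ZMod 2, K (v + x, v + y) = K (x, y) := by
    intro v x y
    have hmem : (Equiv.addLeft v) ∈ cubeAut n :=
      Subgroup.subset_closure (Set.mem_union_right _ ⟨v, rfl⟩)
    simpa using hinv _ hmem x y
  set F : (Fin n → ZMod 2) → ℂ := fun z => K (0, z) with hF
  have hKF : ∀ x y, K (x, y) = F (x + y) := by
    intro x y
    have h := htrans x 0 (x + y)
    have hxx : x + x = 0 := by
      funext i
      exact (zmod2_add_eq_zero (x i) (x i)).mpr rfl
    have hxy : x + (x + y) = y := by rw [← add_assoc, hxx, zero_add]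
    rw [add_zero, hxy] at h
    exact h
  -- permutation invariance of F
  have hFperm : ∀ (σ : Equiv.Perm (Fin n)) (z : Fin n → ZMod 2), F (z ∘ σ) = F z := by
    intro σ z
    have hmem : (Equiv.arrowCongr σ.symm (Equiv.refl (ZMod 2))) ∈ cubeAut n :=
      Subgroup.subset_closure (Set.mem_union_left _ ⟨σ.symm, rfl⟩)
    have h := hinv _ hmem 0 z
    have h0 : (Equiv.arrowCongr σ.symm (Equiv.refl (ZMod 2))) (0 : Fin n → ZMod 2) = 0 := by
      funext i
      simp [Equiv.arrowCongr]
    have hz : (Equiv.arrowCongr σ.symm (Equiv.refl (ZMod 2))) z = z ∘ σ := by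
      funext i
      simp [Equiv.arrowCongr]
    rw [h0, hz] at h
    exact h
  -- Fourier coefficients
  set c : (Fin n → ZMod 2) → ℂ := fun S => ∑ z, F z * chi S z with hc
  set fhat : (Fin n → ZMod 2) → ℂ := fun S => ((2 : ℂ) ^ n)⁻¹ * c S with hfhat
  -- positivity of Fourier coefficients
  have hcnonneg : ∀ S, 0 ≤ c S := by
    intro S
    set e : Fin (Fintype.card (Fin n → ZMod 2)) ≃ (Fin n → ZMod 2) :=
      (Fintype.equivFin (Fin n → ZMod 2)).symm with he
    have h0 := hpos (Fintype.card (Fin n → ZMod 2)) (fun i => e i) (fun i => chi S (e i))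
    have h1 : (∑ i, ∑ j, K (e i, e j) * chi S (e i) * conj (chi S (e j)))
        = ∑ a : Fin n → ZMod 2, ∑ b : Fin n → ZMod 2, K (a, b) * chi S a * conj (chi S b) := by
      rw [← Equiv.sum_comp e (fun a => ∑ b : Fin n → ZMod 2, K (a, b) * chi S a * conj (chi S b))]
      refine Finset.sum_congr rfl fun i _ => ?_
      rw [← Equiv.sum_comp e (fun b => K (e i, b) * chi S (e i) * conj (chi S b))]
    have h2 : (∑ a : Fin n → ZMod 2, ∑ b : Fin n → ZMod 2,
          K (a, b) * chi S a * conj (chi S b)) = (2 : ℂ) ^ n * c S := by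
      have hab : ∀ a b : Fin n → ZMod 2,
          K (a, b) * chi S a * conj (chi S b) = F (a + b) * chi S (a + b) := by
        intro a b
        rw [conj_chi, hKF a b, chi_add_right]
        ring
      simp_rw [hab]
      have hinner : ∀ a : Fin n → ZMod 2,
          (∑ b : Fin n → ZMod 2, F (a + b) * chi S (a + b)) = c S := by
        intro a
        exact Equiv.sum_comp (Equiv.addLeft a) (fun w => F w * chi S w)
      simp_rw [hinner]
      rw [Finset.sum_const, Finset.card_univ]
      have hcard : Fintype.card (Fin n → ZMod 2) = 2 ^ n := by
        simp [Fintype.card_fun]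
      rw [hcard, nsmul_eq_mul]
      push_cast
      ring
    rw [h1, h2] at h0
    have : c S = ((2 : ℂ) ^ n)⁻¹ * ((2 : ℂ) ^ n * c S) := by
      field_simp
    rw [this]
    have hpow : (0 : ℂ) ≤ ((2 : ℂ) ^ n)⁻¹ := by
      have : ((2 : ℂ) ^ n)⁻¹ = (((2 : ℝ) ^ n)⁻¹ : ℝ) := by push_cast; ring
      rw [this, Complex.zero_le_real]
      positivity
    exact mul_nonneg hpow h0
  -- Fourier inversion
  have hinvert : ∀ z, F z = ∑ S : Fin n → ZMod 2, fhat S * chi S z := by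
    intro z
    have step1 : (∑ S : Fin n → ZMod 2, fhat S * chi S z)
        = ((2 : ℂ) ^ n)⁻¹ * ∑ S : Fin n → ZMod 2, ∑ w : Fin n → ZMod 2,
            F w * (chi S w * chi S z) := by
      rw [Finset.mul_sum]
      refine Finset.sum_congr rfl fun S _ => ?_
      rw [hfhat]
      simp only
      rw [mul_assoc, hc]
      simp only
      rw [Finset.sum_mul]
      congr 1
      refine Finset.sum_congr rfl fun w _ => by ring
    have step2 : (∑ S : Fin n → ZMod 2, ∑ w : Fin n → ZMod 2, F w * (chi S w * chi S z))
        = ∑ w : Fin n → ZMod 2, F w * ∑ S : Fin n → ZMod 2, chi S w * chi S z := by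
      rw [Finset.sum_comm]
      exact Finset.sum_congr rfl fun w _ => (Finset.mul_sum _ _ _).symm
    rw [step1, step2]
    have step3 : (∑ w : Fin n → ZMod 2, F w * ∑ S : Fin n → ZMod 2, chi S w * chi S z)
        = F z * (2 : ℂ) ^ n := by
      rw [Finset.sum_eq_single z]
      · rw [sum_chi_mul]
        simp
      · intro w _ hw
        rw [sum_chi_mul]
        simp [hw]
      · intro h
        exact absurd (Finset.mem_univ z) h
    rw [step3]
    field_simp
  -- fhat depends only on the weight
  have hconst : ∀ S T : Fin n → ZMod 2, hammingNorm S = hammingNorm T → fhat S = fhat T := by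
    intro S T hST
    obtain ⟨σ, hσ⟩ := exists_perm_of_norm_eq hST
    have : c T = c S := by
      rw [hc]
      simp only
      rw [← Equiv.sum_comp (Equiv.arrowCongr σ.symm (Equiv.refl (ZMod 2)))
        (fun z => F z * chi T z)]
      refine Finset.sum_congr rfl fun z _ => ?_
      have harr : (Equiv.arrowCongr σ.symm (Equiv.refl (ZMod 2))) z = z ∘ σ := by
        funext i
        simp [Equiv.arrowCongr]
      rw [harr, hFperm σ z, ← hσ, chi_comp]
    rw [hfhat]
    simp only [this]
  -- the coefficients
  refine ⟨fun k => (fhat (base n k)).re, ?_, ?_⟩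
  · intro k
    have := hcnonneg (base n k)
    have h0 : 0 ≤ fhat (base n k) := by
      rw [hfhat]
      simp only
      refine mul_nonneg ?_ this
      have : ((2 : ℂ) ^ n)⁻¹ = (((2 : ℝ) ^ n)⁻¹ : ℝ) := by push_cast; ring
      rw [this, Complex.zero_le_real]
      positivity
    exact (Complex.le_def.mp h0).1
  · intro x y
    have hreal : ∀ k : ℕ, (((fhat (base n k)).re : ℝ) : ℂ) = fhat (base n k) := by
      intro k
      have h0 : 0 ≤ fhat (base n k) := by
        rw [hfhat]
        simp only
        refine mul_nonneg ?_ (hcnonneg _)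
        have : ((2 : ℂ) ^ n)⁻¹ = (((2 : ℝ) ^ n)⁻¹ : ℝ) := by push_cast; ring
        rw [this, Complex.zero_le_real]
        positivity
      have him : (fhat (base n k)).im = 0 := by
        have := (Complex.le_def.mp h0).2
        simpa using this.symm
      exact Complex.ext (by simp) (by simp [him])
    set z := x + y with hz
    have hmaps : ∀ S ∈ (Finset.univ : Finset (Fin n → ZMod 2)),
        hammingNorm S ∈ Finset.range (n + 1) := by
      intro S _
      rw [Finset.mem_range]
      exact Nat.lt_succ_of_le (hammingNorm_le S)
    calc K (x, y) = F z := hKF x y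
      _ = ∑ S : Fin n → ZMod 2, fhat S * chi S z := hinvert z
      _ = ∑ k ∈ Finset.range (n + 1), ∑ S ∈ (Finset.univ :
            Finset (Fin n → ZMod 2)).filter (fun S => hammingNorm S = k),
            fhat S * chi S z := (Finset.sum_fiberwise_of_maps_to hmaps _).symm
      _ = ∑ k ∈ Finset.range (n + 1),
            (fhat (base n k)) * (krawtchouk n k (hammingNorm z) : ℂ) := by
          refine Finset.sum_congr rfl fun k hk => ?_
          rw [Finset.mem_range] at hk
          have hkn : k ≤ n := by omega
          have hterm : ∀ S ∈ (Finset.univ :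
              Finset (Fin n → ZMod 2)).filter (fun S => hammingNorm S = k),
              fhat S * chi S z = fhat (base n k) * chi S z := by
            intro S hS
            rw [Finset.mem_filter] at hS
            rw [hconst S (base n k) (by rw [hS.2, norm_base hkn])]
          rw [Finset.sum_congr rfl hterm, ← Finset.mul_sum, sum_chi_weight]
      _ = ∑ k : Fin (n + 1), ((fhat (base n k)).re : ℂ) *
            (krawtchouk n k (hammingDist x y) : ℂ) := by
          rw [Fin.sum_univ_eq_sum_range
            (fun k => ((fhat (base n k)).re : ℂ) * (krawtchouk n k (hammingDist x y) : ℂ))]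
          refine Finset.sum_congr rfl fun k _ => ?_
          rw [hreal k, hammingDist_eq, ← hz]
end

section
/- Let n ≥ 1 and d ≥ 0. The Laplace operator Δ maps Pol_{=d}(ℂ^n) onto Pol_{=d−2}(ℂ^n), and the space Harm_d = {f ∈ Pol_{=d}(ℂ^n) : Δ f = 0} of harmonic homogeneous polynomials of degree d has complex dimension h_d = binom(n+d−1, n−1) − binom(n+d−3, n−1), where the second binomial coefficient is taken to be 0 when n + d − 3 < n − 1. -/
open MvPolynomial

/-- The Laplace operator `Δ = ∑ i ∂²/∂x_i²` on polynomials in `n` variables. -/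
noncomputable def polyLaplacian (n : ℕ) :
    MvPolynomial (Fin n) ℂ →ₗ[ℂ] MvPolynomial (Fin n) ℂ :=
  ∑ i : Fin n, ((pderiv i).toLinearMap ∘ₗ (pderiv i).toLinearMap)

/-- `Harm_d`: the space of harmonic homogeneous polynomials of degree `d`
in `n` variables over `ℂ`. -/
noncomputable def harmSubmodule (n d : ℕ) : Submodule ℂ (MvPolynomial (Fin n) ℂ) :=
  homogeneousSubmodule (Fin n) ℂ d ⊓ LinearMap.ker (polyLaplacian n)

namespace HarmAux

open Finsupp


variable {n : ℕ}

lemma lap_monomial (s : Fin n →₀ ℕ) (a : ℂ) :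
    polyLaplacian n (monomial s a) =
      ∑ i : Fin n, monomial (s - single i 1 - single i 1) (a * (s i) * ((s i - 1 : ℕ))) := by
  rw [polyLaplacian, LinearMap.sum_apply]
  refine Finset.sum_congr rfl fun i _ => ?_
  simp [pderiv_monomial, Finsupp.sub_apply]

lemma sub_sub_eq (s t : Fin n →₀ ℕ) (i : Fin n) (h : Finsupp.single i 2 + t = s) :
    s - single i 1 - single i 1 = t := by
  ext j
  have := DFunLike.congr_fun h j
  simp only [Finsupp.add_apply, Finsupp.single_apply, Finsupp.sub_apply] at *
  by_cases hj : i = j <;> simp [hj] at * <;> omega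

lemma add_eq_of (s t : Fin n →₀ ℕ) (i : Fin n) (h : s - single i 1 - single i 1 = t)
    (h2 : 2 ≤ s i) : Finsupp.single i 2 + t = s := by
  ext j
  have := DFunLike.congr_fun h j
  simp only [Finsupp.add_apply, Finsupp.single_apply, Finsupp.sub_apply] at *
  by_cases hj : i = j <;> simp [hj] at * <;> omega

def wt (n : ℕ) (s : Fin n →₀ ℕ) : ℕ := ∏ i : Fin n, (s i).factorial

lemma degree_add' (a b : Fin n →₀ ℕ) : (a + b).degree = a.degree + b.degree := by
  simp [Finsupp.degree_eq_weight_one, map_add]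

lemma degree_single' (i : Fin n) (k : ℕ) : (Finsupp.single i k).degree = k := by
  rcases Nat.eq_zero_or_pos k with h | h
  · simp [h]
  · exact Finsupp.degree_single i k

lemma wt_pos (s : Fin n →₀ ℕ) : 0 < wt n s :=
  Finset.prod_pos fun _ _ => Nat.factorial_pos _

lemma wt_eq (s t : Fin n →₀ ℕ) (i : Fin n) (h : Finsupp.single i 2 + t = s) :
    wt n s = (t i + 1) * (t i + 2) * wt n t := by
  have hsi : s i = t i + 2 := by
    have := DFunLike.congr_fun h i
    simp [Finsupp.add_apply, Finsupp.single_apply] at this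
    omega
  have hsj : ∀ j, j ≠ i → s j = t j := by
    intro j hj
    have := DFunLike.congr_fun h j
    simp [Finsupp.add_apply, Finsupp.single_apply, (Ne.symm hj)] at this
    omega
  rw [wt, wt, ← Finset.prod_erase_mul _ _ (Finset.mem_univ i),
    ← Finset.prod_erase_mul _ _ (Finset.mem_univ i)]
  rw [Finset.prod_congr rfl (fun j hj => by rw [hsj j (Finset.ne_of_mem_erase hj)])]
  rw [hsi]
  have : (t i + 2).factorial = (t i).factorial * ((t i + 1) * (t i + 2)) := by
    rw [Nat.factorial_succ, Nat.factorial_succ]; ring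
  rw [this]; ring

/-- The Fischer-type bilinear pairing. -/
noncomputable def B (n : ℕ) : MvPolynomial (Fin n) ℂ →ₗ[ℂ] MvPolynomial (Fin n) ℂ →ₗ[ℂ] ℂ :=
  (basisMonomials (Fin n) ℂ).constr ℂ fun s => (wt n s : ℂ) • (lcoeff ℂ s)

lemma B_monomial_left (s : Fin n →₀ ℕ) (a : ℂ) (g : MvPolynomial (Fin n) ℂ) :
    B n (monomial s a) g = (wt n s : ℂ) * a * coeff s g := by
  have h1 : monomial s a = a • ((basisMonomials (Fin n) ℂ) s) := by
    simp [coe_basisMonomials, smul_monomial]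
  rw [h1, map_smul, B, Module.Basis.constr_basis]
  simp
  ring

lemma B_monomial_right (f : MvPolynomial (Fin n) ℂ) (t : Fin n →₀ ℕ) (b : ℂ) :
    B n f (monomial t b) = (wt n t : ℂ) * coeff t f * b := by
  induction f using MvPolynomial.induction_on' with
  | monomial u c =>
    rw [B_monomial_left, coeff_monomial, coeff_monomial]
    by_cases h : u = t
    · subst h; simp [coeff_monomial]
    · simp [h, Ne.symm h]
  | add p q hp hq => simp [map_add, coeff_add, hp, hq]; ring

/-- the quadratic form `q = ∑ X i ^ 2`. -/
noncomputable def qpoly (n : ℕ) : MvPolynomial (Fin n) ℂ := ∑ i : Fin n, X i ^ 2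

lemma key (s t : Fin n →₀ ℕ) (a b : ℂ) :
    B n (polyLaplacian n (monomial s a)) (monomial t b)
      = B n (monomial s a) (qpoly n * monomial t b) := by
  rw [lap_monomial, map_sum, LinearMap.sum_apply, qpoly, Finset.sum_mul, B_monomial_left]
  have hq : ∀ i : Fin n, (X i : MvPolynomial (Fin n) ℂ) ^ 2 * monomial t b
      = monomial (Finsupp.single i 2 + t) b := by
    intro i
    rw [X_pow_eq_monomial, monomial_mul, one_mul]
  simp only [hq, coeff_sum, Finset.mul_sum]
  refine Finset.sum_congr rfl fun i _ => ?_
  rw [B_monomial_left, coeff_monomial, coeff_monomial]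
  by_cases h : Finsupp.single i 2 + t = s
  · have ht : s - single i 1 - single i 1 = t := sub_sub_eq s t i h
    have hsi : s i = t i + 2 := by
      have := DFunLike.congr_fun h i
      simp [Finsupp.add_apply, Finsupp.single_apply] at this
      omega
    rw [ht, if_pos rfl, if_pos h, wt_eq s t i h, hsi]
    push_cast
    ring
  · rw [if_neg h]
    by_cases h2 : t = s - single i 1 - single i 1
    · have hlt : s i < 2 := by
        by_contra h3
        exact h (add_eq_of s t i h2.symm (le_of_not_gt h3))
      interval_cases h4 : s i <;> simp [h4] <;> ring
    · rw [if_neg h2]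
      ring


lemma B_lap (f g : MvPolynomial (Fin n) ℂ) :
    B n (polyLaplacian n f) g = B n f (qpoly n * g) := by
  induction f using MvPolynomial.induction_on' with
  | monomial s a =>
    induction g using MvPolynomial.induction_on' with
    | monomial t b => exact key s t a b
    | add p q hp hq => simp only [mul_add, map_add, hp, hq]
  | add p q hp hq => simp only [map_add, LinearMap.add_apply, hp, hq]

lemma coeff_eq_zero_of_ne {f : MvPolynomial (Fin n) ℂ} {e : ℕ}
    (hf : f ∈ homogeneousSubmodule (Fin n) ℂ e) {t : Fin n →₀ ℕ} (ht : t.degree ≠ e) :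
    coeff t f = 0 := by
  by_contra h
  refine ht ?_
  rw [Finsupp.degree_eq_weight_one]
  exact (mem_homogeneousSubmodule _ _).1 hf h

lemma monomial_mem (t : Fin n →₀ ℕ) (a : ℂ) (e : ℕ) (ht : t.degree = e) :
    (monomial t a : MvPolynomial (Fin n) ℂ) ∈ homogeneousSubmodule (Fin n) ℂ e :=
  isHomogeneous_monomial _ ht

lemma eq_zero_of_B_left {e : ℕ} {h : MvPolynomial (Fin n) ℂ}
    (hh : h ∈ homogeneousSubmodule (Fin n) ℂ e)
    (H : ∀ g ∈ homogeneousSubmodule (Fin n) ℂ e, B n h g = 0) : h = 0 := by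
  ext t
  by_cases ht : t.degree = e
  · have := H (monomial t 1) (monomial_mem t 1 e ht)
    rw [B_monomial_right] at this
    have hw : (wt n t : ℂ) ≠ 0 := Nat.cast_ne_zero.2 (wt_pos t).ne'
    simpa [hw] using this
  · simp [coeff_eq_zero_of_ne hh ht]

lemma eq_zero_of_B_right {e : ℕ} {h : MvPolynomial (Fin n) ℂ}
    (hh : h ∈ homogeneousSubmodule (Fin n) ℂ e)
    (H : ∀ f ∈ homogeneousSubmodule (Fin n) ℂ e, B n f h = 0) : h = 0 := by
  ext t
  by_cases ht : t.degree = e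
  · have := H (monomial t 1) (monomial_mem t 1 e ht)
    rw [B_monomial_left] at this
    have hw : (wt n t : ℂ) ≠ 0 := Nat.cast_ne_zero.2 (wt_pos t).ne'
    simpa [hw] using this
  · simp [coeff_eq_zero_of_ne hh ht]

lemma lap_monomial_mem {d : ℕ} (s : Fin n →₀ ℕ) (a : ℂ) (hs : s.degree = d) :
    polyLaplacian n (monomial s a) ∈ homogeneousSubmodule (Fin n) ℂ (d - 2) := by
  rw [lap_monomial]
  refine Submodule.sum_mem _ fun i _ => ?_
  by_cases h2 : 2 ≤ s i
  · refine monomial_mem _ _ _ ?_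
    have hadd : Finsupp.single i 2 + (s - single i 1 - single i 1) = s :=
      add_eq_of s _ i rfl h2
    have := congrArg Finsupp.degree hadd
    rw [degree_add', degree_single'] at this
    omega
  · interval_cases h4 : s i <;> simp [h4]

lemma lap_mem {d : ℕ} {f : MvPolynomial (Fin n) ℂ}
    (hf : f ∈ homogeneousSubmodule (Fin n) ℂ d) :
    polyLaplacian n f ∈ homogeneousSubmodule (Fin n) ℂ (d - 2) := by
  have hrw : polyLaplacian n f
      = ∑ s ∈ f.support, polyLaplacian n (monomial s (coeff s f)) := by
    conv_lhs => rw [f.as_sum]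
    rw [map_sum]
  rw [hrw]
  refine Submodule.sum_mem _ fun s hs => ?_
  refine lap_monomial_mem s _ ?_
  rw [Finsupp.degree_eq_weight_one]
  exact (mem_homogeneousSubmodule _ _).1 hf (MvPolynomial.mem_support_iff.1 hs)

lemma lap_eq_zero_of_lt {d : ℕ} (hd : d < 2) {f : MvPolynomial (Fin n) ℂ}
    (hf : f ∈ homogeneousSubmodule (Fin n) ℂ d) : polyLaplacian n f = 0 := by
  have hrw : polyLaplacian n f
      = ∑ s ∈ f.support, polyLaplacian n (monomial s (coeff s f)) := by
    conv_lhs => rw [f.as_sum]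
    rw [map_sum]
  rw [hrw]
  refine Finset.sum_eq_zero fun s hs => ?_
  have hdeg : s.degree = d := by
    rw [Finsupp.degree_eq_weight_one]
    exact (mem_homogeneousSubmodule _ _).1 hf (MvPolynomial.mem_support_iff.1 hs)
  rw [lap_monomial]
  refine Finset.sum_eq_zero fun i _ => ?_
  have : s i ≤ 1 := by have := Finsupp.le_degree i s; omega
  interval_cases h4 : s i <;> simp [h4]

lemma qpoly_mem (d : ℕ) (hd : 2 ≤ d) {g : MvPolynomial (Fin n) ℂ}
    (hg : g ∈ homogeneousSubmodule (Fin n) ℂ (d - 2)) :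
    qpoly n * g ∈ homogeneousSubmodule (Fin n) ℂ d := by
  have hq : (qpoly n) ∈ homogeneousSubmodule (Fin n) ℂ 2 := by
    refine Submodule.sum_mem _ fun i _ => ?_
    rw [X_pow_eq_monomial]
    exact monomial_mem _ _ _ (by simp [degree_single'])
  have := ((mem_homogeneousSubmodule _ _).1 hq).mul ((mem_homogeneousSubmodule _ _).1 hg)
  rw [mem_homogeneousSubmodule]
  convert this using 1
  omega

lemma qpoly_ne_zero (hn : 1 ≤ n) : qpoly n ≠ 0 := by
  intro h
  have h0 : coeff (Finsupp.single (⟨0, hn⟩ : Fin n) 2) (qpoly n) = 1 := by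
    rw [qpoly, coeff_sum]
    have hco : ∀ j : Fin n, coeff (Finsupp.single (⟨0, hn⟩ : Fin n) 2)
        ((X j : MvPolynomial (Fin n) ℂ) ^ 2) = if j = ⟨0, hn⟩ then 1 else 0 := by
      intro j
      rw [X_pow_eq_monomial, coeff_monomial]
      by_cases hj : j = (⟨0, hn⟩ : Fin n)
      · simp [hj]
      · rw [if_neg, if_neg hj]
        intro hc
        exact hj (Finsupp.single_left_injective (by norm_num : (2:ℕ) ≠ 0) hc)
    simp [hco]
  rw [h] at h0
  simp at h0



noncomputable def degEquivSym (n d : ℕ) :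
    {s : Fin n →₀ ℕ // s.degree = d} ≃ Sym (Fin n) d :=
  Equiv.subtypeEquiv (Finsupp.orderIsoMultiset).toEquiv (fun s => by
    have : Multiset.card (Finsupp.toMultiset s) = s.degree := by
      rw [Finsupp.card_toMultiset]; rfl
    constructor
    · intro h
      show Multiset.card _ = d
      simp [Finsupp.coe_orderIsoMultiset, this, h]
    · intro h
      have h2 : Multiset.card (Finsupp.toMultiset s) = d := h
      rw [this] at h2; exact h2)

noncomputable instance degFintype (n d : ℕ) : Fintype {s : Fin n →₀ ℕ // s.degree = d} :=
  Fintype.ofEquiv _ (degEquivSym n d).symm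

lemma card_deg (n d : ℕ) :
    Fintype.card {s : Fin n →₀ ℕ // s.degree = d} = (n + d - 1).choose d := by
  rw [Fintype.card_congr (degEquivSym n d), Sym.card_sym_eq_multichoose,
    Fintype.card_fin, Nat.multichoose_eq]

instance degFinite (n d : ℕ) : Finite {s : Fin n →₀ ℕ | s.degree = d} :=
  Finite.of_equiv _ (degEquivSym n d).symm

noncomputable def homogEquiv (n d : ℕ) :
    (homogeneousSubmodule (Fin n) ℂ d) ≃ₗ[ℂ] ({s : Fin n →₀ ℕ // s.degree = d} → ℂ) :=
  (LinearEquiv.ofEq _ _ (homogeneousSubmodule_eq_finsupp_supported (Fin n) ℂ d)) ≪≫ₗ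
    (AddMonoidAlgebra.supportedEquivFinsupp {s : Fin n →₀ ℕ | s.degree = d}) ≪≫ₗ
    (Finsupp.linearEquivFunOnFinite ℂ ℂ _)

instance homogFinDim (n d : ℕ) : FiniteDimensional ℂ (homogeneousSubmodule (Fin n) ℂ d) :=
  Module.Finite.equiv (homogEquiv n d).symm

lemma finrank_homog (n d : ℕ) :
    Module.finrank ℂ (homogeneousSubmodule (Fin n) ℂ d) = (n + d - 1).choose d := by
  rw [(homogEquiv n d).finrank_eq, Module.finrank_fintype_fun_eq_card, card_deg]

lemma B_symm (f g : MvPolynomial (Fin n) ℂ) : B n f g = B n g f := by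
  induction g using MvPolynomial.induction_on' with
  | monomial t b => rw [B_monomial_right, B_monomial_left]; ring
  | add p q hp hq => simp only [map_add, LinearMap.add_apply, hp, hq]

noncomputable def lapRestrict (n d : ℕ) :
    (homogeneousSubmodule (Fin n) ℂ d) →ₗ[ℂ] (homogeneousSubmodule (Fin n) ℂ (d - 2)) :=
  (polyLaplacian n).restrict fun _ hx => lap_mem hx

noncomputable def bForm (n e : ℕ) :
    LinearMap.BilinForm ℂ (homogeneousSubmodule (Fin n) ℂ e) :=
  (B n).compl₁₂ (homogeneousSubmodule (Fin n) ℂ e).subtype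
    (homogeneousSubmodule (Fin n) ℂ e).subtype

lemma bForm_apply {e : ℕ} (x y : homogeneousSubmodule (Fin n) ℂ e) :
    bForm n e x y = B n (x : MvPolynomial (Fin n) ℂ) (y : MvPolynomial (Fin n) ℂ) := rfl

lemma bForm_nondeg {e : ℕ} : (bForm n e).Nondegenerate := by
  refine ⟨fun x hx => ?_, fun x hx => ?_⟩
  · have hx0 : (x : MvPolynomial (Fin n) ℂ) = 0 :=
      eq_zero_of_B_left x.2 fun g' hg' => hx ⟨g', hg'⟩
    exact Subtype.ext hx0
  · exact Subtype.ext (eq_zero_of_B_right x.2 fun g' hg' => hx ⟨g', hg'⟩)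

lemma lapRestrict_range_top (hn : 1 ≤ n) {d : ℕ} (hd : 2 ≤ d) :
    LinearMap.range (lapRestrict n d) = ⊤ := by
  by_contra hS
  have hlt : LinearMap.range (lapRestrict n d) < ⊤ := lt_top_iff_ne_top.mpr hS
  obtain ⟨g, -, hg⟩ := SetLike.exists_of_lt hlt
  have hforall : ¬ ∀ φ : Module.Dual ℂ (homogeneousSubmodule (Fin n) ℂ (d - 2)),
      φ ∈ (LinearMap.range (lapRestrict n d)).dualAnnihilator → φ g = 0 := by
    rw [Subspace.forall_mem_dualAnnihilator_apply_eq_zero_iff]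
    exact hg
  push_neg at hforall
  obtain ⟨φ, hφmem, hφg⟩ := hforall
  have nondeg : (bForm n (d - 2)).Nondegenerate := bForm_nondeg
  set g₀ := ((bForm n (d - 2)).toDual nondeg).symm φ with hg₀def
  have hg₀ : ∀ v, bForm n (d - 2) g₀ v = φ v := fun v =>
    LinearMap.BilinForm.apply_toDual_symm_apply (hB := nondeg) φ v
  have hBg₀ : ∀ f : homogeneousSubmodule (Fin n) ℂ d,
      B n (f : MvPolynomial (Fin n) ℂ) (qpoly n * (g₀ : MvPolynomial (Fin n) ℂ)) = 0 := by
    intro f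
    have h1 : φ (lapRestrict n d f) = 0 :=
      (Submodule.mem_dualAnnihilator φ).1 hφmem _ (LinearMap.mem_range_self _ f)
    have h2 : B n (g₀ : MvPolynomial (Fin n) ℂ)
        (polyLaplacian n (f : MvPolynomial (Fin n) ℂ)) = 0 := by
      have h3 := hg₀ (lapRestrict n d f)
      rw [h1, bForm_apply] at h3
      simpa [lapRestrict, LinearMap.restrict_apply] using h3
    rw [← B_lap, B_symm]
    exact h2
  have hq0 : qpoly n * (g₀ : MvPolynomial (Fin n) ℂ) = 0 :=
    eq_zero_of_B_right (qpoly_mem d hd g₀.2) fun f hf => hBg₀ ⟨f, hf⟩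
  have hg₀0 : (g₀ : MvPolynomial (Fin n) ℂ) = 0 := by
    rcases mul_eq_zero.1 hq0 with h | h
    · exact absurd h (qpoly_ne_zero hn)
    · exact h
  apply hφg
  rw [← hg₀ g, bForm_apply, hg₀0]
  simp


lemma finrank_homog' {n : ℕ} (hn : 1 ≤ n) (k : ℕ) :
    Module.finrank ℂ (homogeneousSubmodule (Fin n) ℂ k) = (n + k - 1).choose (n - 1) := by
  rw [finrank_homog, ← Nat.choose_symm (by omega : k ≤ n + k - 1)]
  congr 1
  omega

end HarmAux

open HarmAux in
/-- the Laplace operator maps `Pol_{=d}(ℂ^n)` onto `Pol_{=d-2}(ℂ^n)`,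
and `dim Harm_d = binom(n+d-1, n-1) - binom(n+d-3, n-1)` (the second binomial being
`0` when `n + d - 3 < n - 1`, i.e. when `d < 2`). -/
theorem laplacian_surjective_and_harm_finrank (n d : ℕ) (hn : 1 ≤ n) :
    (2 ≤ d → ∀ g ∈ homogeneousSubmodule (Fin n) ℂ (d - 2),
      ∃ f ∈ homogeneousSubmodule (Fin n) ℂ d, polyLaplacian n f = g) ∧
    (Module.finrank ℂ (harmSubmodule n d) : ℤ) =
      ((n + d - 1).choose (n - 1) : ℤ) -
        (if 2 ≤ d then ((n + d - 3).choose (n - 1) : ℤ) else 0) := by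
  constructor
  · intro hd g hg
    have htop := lapRestrict_range_top hn hd
    have hmem : (⟨g, hg⟩ : homogeneousSubmodule (Fin n) ℂ (d - 2))
        ∈ LinearMap.range (lapRestrict n d) := htop ▸ Submodule.mem_top
    obtain ⟨f, hf⟩ := hmem
    refine ⟨f, f.2, ?_⟩
    have := congrArg Subtype.val hf
    simpa [lapRestrict, LinearMap.restrict_apply] using this
  · -- the equivalence between harmSubmodule and the kernel of the restricted Laplacian
    have hker : Module.finrank ℂ (LinearMap.ker (lapRestrict n d))
        = Module.finrank ℂ (harmSubmodule n d) := by
      rw [lapRestrict, LinearMap.ker_restrict]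
      have e1 := Submodule.equivMapOfInjective
        (homogeneousSubmodule (Fin n) ℂ d).subtype
        (Submodule.injective_subtype (homogeneousSubmodule (Fin n) ℂ d))
        ((LinearMap.ker (polyLaplacian n)).comap (homogeneousSubmodule (Fin n) ℂ d).subtype)
      have e2 : Submodule.map (homogeneousSubmodule (Fin n) ℂ d).subtype
          ((LinearMap.ker (polyLaplacian n)).comap (homogeneousSubmodule (Fin n) ℂ d).subtype)
          = harmSubmodule n d := by
        rw [Submodule.map_comap_subtype, harmSubmodule]
      rw [e1.finrank_eq, e2]
    by_cases hd : 2 ≤ d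
    · rw [if_pos hd]
      have hrn := LinearMap.finrank_range_add_finrank_ker (lapRestrict n d)
      rw [lapRestrict_range_top hn hd, finrank_top, hker,
        finrank_homog' hn, finrank_homog' hn] at hrn
      have h3 : n + d - 3 = n + (d - 2) - 1 := by omega
      rw [h3]
      omega
    · rw [if_neg hd]
      have heq : harmSubmodule n d = homogeneousSubmodule (Fin n) ℂ d := by
        rw [harmSubmodule]
        refine inf_eq_left.2 fun f hf => ?_
        exact LinearMap.mem_ker.2 (lap_eq_zero_of_lt (by omega) hf)
      rw [heq, finrank_homog' hn]
      omega
end
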